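/- For |q|<1: Σ_{n≥0} (−1;q)_n q^{n(n+1)/2} / (q;q)_n = (−q;q)_∞ (−q;q²)_∞. -/

import Mathlib

open scoped BigOperators

open Finset Filter Topology

noncomputable section
namespace BD

/-- `(q;q)_n` -/
def P (q : ℂ) (n : ℕ) : ℂ := ∏ j ∈ Finset.range n, (1 - q ^ (j + 1))

lemma one_sub_ne {q : ℂ} (hq : ‖q‖ < 1) (j : ℕ) : (1 : ℂ) - q ^ (j + 1) ≠ 0 := by
  intro h
  have h1 : q ^ (j + 1) = 1 := by linear_combination -h
  have : ‖q ^ (j + 1)‖ < 1 := by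
    rw [norm_pow]
    exact pow_lt_one₀ (norm_nonneg q) hq (Nat.succ_ne_zero j)
  rw [h1, norm_one] at this
  exact lt_irrefl 1 this

lemma P_ne {q : ℂ} (hq : ‖q‖ < 1) (n : ℕ) : P q n ≠ 0 :=
  Finset.prod_ne_zero_iff.2 fun j _ => one_sub_ne hq j

lemma exp_neg_le_one_sub {x : ℝ} (h0 : 0 ≤ x) (h1 : x < 1) :
    Real.exp (-(x / (1 - x))) ≤ 1 - x := by
  have hx : (0:ℝ) < 1 - x := by linarith
  have hy : x / (1 - x) + 1 = (1 - x)⁻¹ := by field_simp; ring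
  have h2 : x / (1 - x) + 1 ≤ Real.exp (x / (1 - x)) := Real.add_one_le_exp _
  rw [Real.exp_neg]
  calc (Real.exp (x / (1 - x)))⁻¹ ≤ (x / (1 - x) + 1)⁻¹ := by
        apply inv_anti₀ (by positivity) h2
    _ = 1 - x := by rw [hy, inv_inv]

lemma sum_pow_le {r : ℝ} (h0 : 0 ≤ r) (h1 : r < 1) (n : ℕ) :
    ∑ j ∈ Finset.range n, r ^ (j + 1) ≤ r / (1 - r) := by
  have hsum : ∑ j ∈ Finset.range n, r ^ (j + 1) = r * ∑ j ∈ Finset.range n, r ^ j := by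
    rw [Finset.mul_sum]; exact Finset.sum_congr rfl fun j _ => by ring
  rw [hsum, div_eq_mul_inv]
  apply mul_le_mul_of_nonneg_left _ h0
  calc ∑ j ∈ Finset.range n, r ^ j ≤ ∑' j : ℕ, r ^ j :=
        Summable.sum_le_tsum _ (fun i _ => pow_nonneg h0 i) (summable_geometric_of_lt_one h0 h1)
    _ = (1 - r)⁻¹ := tsum_geometric_of_lt_one h0 h1

lemma norm_P_le {q : ℂ} (hq : ‖q‖ < 1) (n : ℕ) :
    ‖P q n‖ ≤ Real.exp (‖q‖ / (1 - ‖q‖)) := by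
  have h0 : (0:ℝ) ≤ ‖q‖ := norm_nonneg q
  rw [P, norm_prod]
  calc ∏ j ∈ Finset.range n, ‖(1:ℂ) - q ^ (j + 1)‖
      ≤ ∏ j ∈ Finset.range n, Real.exp (‖q‖ ^ (j + 1)) := by
        apply Finset.prod_le_prod (fun j _ => norm_nonneg _)
        intro j _
        calc ‖(1:ℂ) - q ^ (j + 1)‖ ≤ ‖(1:ℂ)‖ + ‖q ^ (j + 1)‖ := norm_sub_le _ _
          _ = 1 + ‖q‖ ^ (j + 1) := by rw [norm_one, norm_pow]
          _ ≤ Real.exp (‖q‖ ^ (j + 1)) := by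
              have := Real.add_one_le_exp (‖q‖ ^ (j + 1)); linarith
    _ = Real.exp (∑ j ∈ Finset.range n, ‖q‖ ^ (j + 1)) := by rw [Real.exp_sum]
    _ ≤ Real.exp (‖q‖ / (1 - ‖q‖)) := Real.exp_le_exp.2 (sum_pow_le h0 hq n)

lemma le_norm_P {q : ℂ} (hq : ‖q‖ < 1) (n : ℕ) :
    Real.exp (-(‖q‖ / (1 - ‖q‖) ^ 2)) ≤ ‖P q n‖ := by
  have h0 : (0:ℝ) ≤ ‖q‖ := norm_nonneg q
  have h1r : (0:ℝ) < 1 - ‖q‖ := by linarith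
  rw [P, norm_prod]
  have key : ∀ j : ℕ, Real.exp (-(‖q‖ ^ (j + 1) / (1 - ‖q‖))) ≤ ‖(1:ℂ) - q ^ (j + 1)‖ := by
    intro j
    have hxr : ‖q‖ ^ (j + 1) ≤ ‖q‖ := pow_le_of_le_one h0 hq.le (Nat.succ_ne_zero j)
    have hx0 : 0 ≤ ‖q‖ ^ (j + 1) := pow_nonneg h0 _
    have hx1 : ‖q‖ ^ (j + 1) < 1 := lt_of_le_of_lt hxr hq
    calc Real.exp (-(‖q‖ ^ (j + 1) / (1 - ‖q‖)))
        ≤ Real.exp (-(‖q‖ ^ (j + 1) / (1 - ‖q‖ ^ (j + 1)))) := by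
          apply Real.exp_le_exp.2
          apply neg_le_neg
          apply div_le_div_of_nonneg_left hx0 (by linarith) (by linarith)
      _ ≤ 1 - ‖q‖ ^ (j + 1) := exp_neg_le_one_sub hx0 hx1
      _ ≤ ‖(1:ℂ) - q ^ (j + 1)‖ := by
          have := norm_sub_norm_le (1:ℂ) (q ^ (j + 1))
          rw [norm_one, norm_pow] at this
          linarith
  calc Real.exp (-(‖q‖ / (1 - ‖q‖) ^ 2))
      ≤ Real.exp (-(∑ j ∈ Finset.range n, ‖q‖ ^ (j + 1) / (1 - ‖q‖))) := by
        apply Real.exp_le_exp.2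
        apply neg_le_neg
        rw [← Finset.sum_div]
        rw [div_le_div_iff₀ h1r (by positivity)]
        calc (∑ j ∈ Finset.range n, ‖q‖ ^ (j+1)) * (1 - ‖q‖) ^ 2
            ≤ (‖q‖ / (1 - ‖q‖)) * (1 - ‖q‖) ^ 2 := by
              apply mul_le_mul_of_nonneg_right (sum_pow_le h0 hq n) (by positivity)
          _ = ‖q‖ * (1 - ‖q‖) := by
              rw [sq, div_mul_eq_mul_div, mul_comm (1 - ‖q‖) (1 - ‖q‖), mul_div_assoc,
                mul_div_assoc, div_self h1r.ne', mul_one]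
    _ = ∏ j ∈ Finset.range n, Real.exp (-(‖q‖ ^ (j + 1) / (1 - ‖q‖))) := by
        rw [← Real.exp_sum, ← Finset.sum_neg_distrib]
    _ ≤ ∏ j ∈ Finset.range n, ‖(1:ℂ) - q ^ (j + 1)‖ :=
        Finset.prod_le_prod (fun j _ => (Real.exp_pos _).le) (fun j _ => key j)


def c (q : ℂ) (N n : ℕ) : ℂ := P q N / (P q n * P q (N - n))

lemma P_succ (q : ℂ) (n : ℕ) : P q (n + 1) = P q n * (1 - q ^ (n + 1)) :=
  Finset.prod_range_succ _ _

lemma P_zero (q : ℂ) : P q 0 = 1 := by simp [P]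

lemma c_zero {q : ℂ} (hq : ‖q‖ < 1) (N : ℕ) : c q N 0 = 1 := by
  rw [c, P_zero, Nat.sub_zero, one_mul, div_self (P_ne hq N)]

lemma c_self {q : ℂ} (hq : ‖q‖ < 1) (N : ℕ) : c q N N = 1 := by
  rw [c, Nat.sub_self, P_zero, mul_one, div_self (P_ne hq N)]

lemma pascal {q : ℂ} (hq : ‖q‖ < 1) {N n : ℕ} (h1 : 1 ≤ n) (h2 : n ≤ N) :
    c q (N + 1) n = c q N n + q ^ (N + 1 - n) * c q N (n - 1) := by
  obtain ⟨m, rfl⟩ : ∃ m, n = m + 1 := ⟨n - 1, by omega⟩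
  obtain ⟨r, rfl⟩ : ∃ r, N = m + 1 + r := ⟨N - (m + 1), by omega⟩
  have e1 : m + 1 + r + 1 - (m + 1) = r + 1 := by omega
  have e2 : m + 1 + r - (m + 1) = r := by omega
  have e3 : m + 1 - 1 = m := by omega
  have e4 : m + 1 + r - m = r + 1 := by omega
  rw [c, c, c, e1, e2, e3, e4]
  rw [show m + 1 + r + 1 = (m + 1 + r) + 1 from rfl, P_succ q (m + 1 + r)]
  rw [P_succ q m, P_succ q r]
  have hm := P_ne hq m
  have hr := P_ne hq r
  have hN := P_ne hq (m + 1 + r)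
  have h1m := one_sub_ne hq m
  have h1r := one_sub_ne hq r
  field_simp
  ring

lemma tri_shift (m : ℕ) : (m + 1) * m = m * (m - 1) + 2 * m := by
  cases m with
  | zero => rfl
  | succ k => simp [Nat.add_sub_cancel]; ring

lemma tri_even (m : ℕ) : 2 * ((m + 1) * m / 2) = (m + 1) * m := by
  rw [mul_comm 2 _, Nat.div_mul_cancel]
  rw [mul_comm (m + 1) m]
  exact (Nat.even_mul_succ_self m).two_dvd

lemma tri_even' (m : ℕ) : 2 * (m * (m - 1) / 2) = m * (m - 1) := by
  cases m with
  | zero => rfl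
  | succ k => simpa [Nat.add_sub_cancel] using tri_even k

lemma exp_shift {N m : ℕ} (hm : m ≤ N) :
    N - m + (m + 1) * m / 2 = m * (m - 1) / 2 + N := by
  have h1 := tri_even m
  have h2 := tri_even' m
  have h3 := tri_shift m
  omega

theorem qbinom {q : ℂ} (hq : ‖q‖ < 1) (z : ℂ) (N : ℕ) :
    ∏ j ∈ Finset.range N, (1 + z * q ^ j)
      = ∑ n ∈ Finset.range (N + 1), c q N n * q ^ (n * (n - 1) / 2) * z ^ n := by
  induction N with
  | zero => simp [c_self hq 0]
  | succ N ih =>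
    rw [Finset.prod_range_succ, ih]
    have expand : (∑ n ∈ Finset.range (N + 1), c q N n * q ^ (n * (n - 1) / 2) * z ^ n)
          * (1 + z * q ^ N)
        = (∑ n ∈ Finset.range (N + 1), c q N n * q ^ (n * (n - 1) / 2) * z ^ n)
          + ∑ n ∈ Finset.range (N + 1), c q N n * q ^ (n * (n - 1) / 2) * q ^ N * z ^ (n + 1) := by
      rw [mul_add, mul_one, Finset.sum_mul]
      congr 1
      exact Finset.sum_congr rfl fun n _ => by ring
    rw [expand]
    have h1 : ∑ n ∈ Finset.range (N + 1), c q N n * q ^ (n * (n - 1) / 2) * z ^ n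
        = ∑ n ∈ Finset.range (N + 2),
            (if n = N + 1 then 0 else c q N n * q ^ (n * (n - 1) / 2) * z ^ n) := by
      conv_rhs => rw [Finset.sum_range_succ]
      rw [if_pos rfl, add_zero]
      exact Finset.sum_congr rfl fun n hn => by
        rw [if_neg (by have := Finset.mem_range.1 hn; omega)]
    have h2 : ∑ n ∈ Finset.range (N + 1), c q N n * q ^ (n * (n - 1) / 2) * q ^ N * z ^ (n + 1)
        = ∑ n ∈ Finset.range (N + 2),
            (if n = 0 then 0
             else c q N (n - 1) * q ^ ((n - 1) * (n - 1 - 1) / 2) * q ^ N * z ^ n) := by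
      conv_rhs => rw [Finset.sum_range_succ']
      rw [if_pos rfl, add_zero]
      exact Finset.sum_congr rfl fun n _ => by
        rw [if_neg (Nat.succ_ne_zero n)]
        simp only [Nat.add_sub_cancel]
    rw [h1, h2, ← Finset.sum_add_distrib]
    apply Finset.sum_congr rfl
    intro n hn
    have hn2 : n ≤ N + 1 := by have := Finset.mem_range.1 hn; omega
    rcases Nat.eq_zero_or_pos n with rfl | hpos
    · rw [if_neg (by omega), if_pos rfl, add_zero, c_zero hq, c_zero hq]
    · obtain ⟨m, rfl⟩ : ∃ m, n = m + 1 := ⟨n - 1, by omega⟩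
      rw [if_neg (Nat.succ_ne_zero m)]
      simp only [Nat.add_sub_cancel]
      by_cases htop : m + 1 = N + 1
      · have hmeq : m = N := by omega
        subst hmeq
        rw [if_pos htop, zero_add, c_self hq, c_self hq]
        have he : (m + 1) * m / 2 = m * (m - 1) / 2 + m := by
          have := exp_shift (le_refl m); omega
        rw [he, pow_add]
        ring
      · rw [if_neg htop]
        have hmN : m + 1 ≤ N := by omega
        rw [pascal hq (Nat.succ_le_succ (Nat.zero_le m)) hmN]
        simp only [Nat.succ_eq_add_one, Nat.add_sub_cancel]
        have hsub : N + 1 - (m + 1) = N - m := by omega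
        rw [hsub]
        have he : (N - m) + (m + 1) * m / 2 = m * (m - 1) / 2 + N := exp_shift (by omega)
        have hq2 : q ^ (N - m) * q ^ ((m + 1) * m / 2)
            = q ^ (m * (m - 1) / 2) * q ^ N := by rw [← pow_add, ← pow_add, he]
        linear_combination (-(c q N m * z ^ (m + 1))) * hq2

lemma summable_log {q z : ℂ} (hq : ‖q‖ < 1) (hz : ‖z‖ ≤ 1) :
    Summable (fun j : ℕ => Complex.log (1 + z * q ^ j)) := by
  apply Summable.of_norm_bounded_eventually_nat (g := fun j => 3 / 2 * ‖q‖ ^ j)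
  · exact (summable_geometric_of_lt_one (norm_nonneg q) hq).mul_left _
  · have h := tendsto_pow_atTop_nhds_zero_of_lt_one (norm_nonneg q) hq
    filter_upwards [h.eventually_le_const (show (0:ℝ) < 1/2 by norm_num)] with j hj
    have hzq : ‖z * q ^ j‖ ≤ 1 / 2 := by
      rw [norm_mul, norm_pow]
      calc ‖z‖ * ‖q‖ ^ j ≤ 1 * ‖q‖ ^ j :=
            mul_le_mul_of_nonneg_right hz (pow_nonneg (norm_nonneg q) j)
        _ = ‖q‖ ^ j := one_mul _
        _ ≤ 1 / 2 := hj
    calc ‖Complex.log (1 + z * q ^ j)‖ ≤ 3 / 2 * ‖z * q ^ j‖ :=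
          Complex.norm_log_one_add_half_le_self hzq
      _ ≤ 3 / 2 * ‖q‖ ^ j := by
          apply mul_le_mul_of_nonneg_left _ (by norm_num)
          rw [norm_mul, norm_pow]
          calc ‖z‖ * ‖q‖ ^ j ≤ 1 * ‖q‖ ^ j :=
                mul_le_mul_of_nonneg_right hz (pow_nonneg (norm_nonneg q) j)
            _ = ‖q‖ ^ j := one_mul _

lemma one_add_ne {q z : ℂ} (hq : ‖q‖ < 1) (hz : ‖z‖ < 1) (j : ℕ) :
    (1 : ℂ) + z * q ^ j ≠ 0 := by
  intro h
  have h1 : z * q ^ j = -1 := by linear_combination h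
  have : ‖z * q ^ j‖ < 1 := by
    rw [norm_mul, norm_pow]
    calc ‖z‖ * ‖q‖ ^ j ≤ ‖z‖ * 1 := by
          apply mul_le_mul_of_nonneg_left _ (norm_nonneg z)
          exact pow_le_one₀ (norm_nonneg q) hq.le
      _ = ‖z‖ := mul_one _
      _ < 1 := hz
  rw [h1] at this
  simp at this

lemma hasProd_one_add {q z : ℂ} (hq : ‖q‖ < 1) (hz : ‖z‖ < 1) :
    HasProd (fun j : ℕ => 1 + z * q ^ j) (∏' j : ℕ, (1 + z * q ^ j)) := by
  exact (Complex.multipliable_of_summable_log (summable_log hq hz.le)).hasProd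

lemma tprod_one_add_eq {q z : ℂ} (hq : ‖q‖ < 1) (hz : ‖z‖ < 1) :
    (∏' j : ℕ, (1 + z * q ^ j))
      = Complex.exp (∑' j : ℕ, Complex.log (1 + z * q ^ j)) := by
  have := Complex.cexp_tsum_eq_tprod (f := fun n => 1 + z * q ^ n)
    (fun n => one_add_ne hq hz n) (summable_log hq hz.le)
  exact this.symm

lemma tprod_one_add_ne {q z : ℂ} (hq : ‖q‖ < 1) (hz : ‖z‖ < 1) :
    (∏' j : ℕ, (1 + z * q ^ j)) ≠ 0 := by
  rw [tprod_one_add_eq hq hz]; exact Complex.exp_ne_zero _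

/-- limit of `(q;q)_N` -/
def PL (q : ℂ) : ℂ := ∏' j : ℕ, (1 - q ^ (j + 1))

lemma hasProd_P {q : ℂ} (hq : ‖q‖ < 1) :
    HasProd (fun j : ℕ => 1 - q ^ (j + 1)) (PL q) := by
  have hz : ‖(-q : ℂ)‖ < 1 := by rwa [norm_neg]
  have h := hasProd_one_add hq hz
  have hfun : (fun j : ℕ => 1 + (-q) * q ^ j) = fun j : ℕ => 1 - q ^ (j + 1) := by
    funext j; ring
  rw [hfun] at h
  exact h

lemma tendsto_P {q : ℂ} (hq : ‖q‖ < 1) :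
    Tendsto (fun N => P q N) atTop (𝓝 (PL q)) :=
  (hasProd_P hq).tendsto_prod_nat

lemma PL_ne {q : ℂ} (hq : ‖q‖ < 1) : PL q ≠ 0 := by
  have h1 : Tendsto (fun N => ‖P q N‖) atTop (𝓝 ‖PL q‖) := (tendsto_P hq).norm
  have h2 : Real.exp (-(‖q‖ / (1 - ‖q‖) ^ 2)) ≤ ‖PL q‖ :=
    ge_of_tendsto' h1 (fun N => le_norm_P hq N)
  intro h
  rw [h, norm_zero] at h2
  exact absurd h2 (not_le.2 (Real.exp_pos _))

theorem eulerT' {q z : ℂ} (hq : ‖q‖ < 1) (hz : ‖z‖ < 1) :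
    ∑' m : ℕ, z ^ m * q ^ (m * (m - 1) / 2) / P q m = ∏' j : ℕ, (1 + z * q ^ j) := by
  classical
  set D := Real.exp (‖q‖ / (1 - ‖q‖)) with hD
  set cc := Real.exp (-(‖q‖ / (1 - ‖q‖) ^ 2)) with hcc
  have hc0 : 0 < cc := Real.exp_pos _
  set F : ℕ → ℕ → ℂ :=
    fun N n => if n ≤ N then c q N n * q ^ (n * (n - 1) / 2) * z ^ n else 0 with hF
  have hbound : ∀ N n, ‖F N n‖ ≤ D / cc ^ 2 * ‖z‖ ^ n := by
    intro N n
    simp only [hF]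
    by_cases h : n ≤ N
    · rw [if_pos h]
      rw [norm_mul, norm_mul, c, norm_div, norm_mul]
      have h1 : ‖P q N‖ / (‖P q n‖ * ‖P q (N - n)‖) ≤ D / cc ^ 2 := by
        apply div_le_div₀ (by positivity) (norm_P_le hq N) (by positivity)
        rw [sq]
        exact mul_le_mul (le_norm_P hq n) (le_norm_P hq (N - n)) hc0.le (norm_nonneg _)
      have h2 : ‖(q : ℂ) ^ (n * (n - 1) / 2)‖ ≤ 1 := by
        rw [norm_pow]
        exact pow_le_one₀ (norm_nonneg q) hq.le
      calc ‖P q N‖ / (‖P q n‖ * ‖P q (N - n)‖) * ‖q ^ (n * (n - 1) / 2)‖ * ‖z ^ n‖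
          ≤ D / cc ^ 2 * 1 * ‖z ^ n‖ := by
            apply mul_le_mul_of_nonneg_right _ (norm_nonneg _)
            apply mul_le_mul h1 h2 (norm_nonneg _) (by positivity)
        _ = D / cc ^ 2 * ‖z‖ ^ n := by rw [mul_one, norm_pow]
    · rw [if_neg h, norm_zero]
      positivity
  have hsum : Summable (fun n => D / cc ^ 2 * ‖z‖ ^ n) :=
    (summable_geometric_of_lt_one (norm_nonneg z) hz).mul_left _
  have hpt : ∀ n, Tendsto (fun N => F N n) atTop
      (𝓝 (z ^ n * q ^ (n * (n - 1) / 2) / P q n)) := by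
    intro n
    have hev : (fun N => c q N n * q ^ (n * (n - 1) / 2) * z ^ n) =ᶠ[atTop] fun N => F N n :=
      eventually_atTop.2 ⟨n, fun N hN => (if_pos hN).symm⟩
    rw [← tendsto_congr' hev]
    have h1 : Tendsto (fun N => P q N) atTop (𝓝 (PL q)) := tendsto_P hq
    have h2 : Tendsto (fun N => P q (N - n)) atTop (𝓝 (PL q)) :=
      h1.comp (tendsto_sub_atTop_nat n)
    have hne : P q n * PL q ≠ 0 := mul_ne_zero (P_ne hq n) (PL_ne hq)
    have h3 : Tendsto (fun N => c q N n) atTop (𝓝 (PL q / (P q n * PL q))) := by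
      simp only [c]
      exact h1.div (tendsto_const_nhds.mul h2) hne
    have h4 := (h3.mul_const (q ^ (n * (n - 1) / 2))).mul_const (z ^ n)
    have hval : PL q / (P q n * PL q) * q ^ (n * (n - 1) / 2) * z ^ n
        = z ^ n * q ^ (n * (n - 1) / 2) / P q n := by
      rw [mul_comm (P q n) (PL q), div_mul_eq_div_div, div_self (PL_ne hq)]
      ring
    rw [← hval]
    exact h4
  have main := tendsto_tsum_of_dominated_convergence hsum hpt
    (Eventually.of_forall (fun N n => hbound N n))
  have hFN : ∀ N : ℕ, (∑' n, F N n) = ∏ j ∈ Finset.range N, (1 + z * q ^ j) := by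
    intro N
    rw [qbinom hq z N]
    simp only [hF]
    rw [tsum_eq_sum (s := Finset.range (N + 1))
      (fun n hn => if_neg (by simp only [Finset.mem_range] at hn; omega))]
    exact Finset.sum_congr rfl fun n hn => if_pos (by
      simp only [Finset.mem_range] at hn; omega)
  have main2 : Tendsto (fun N => ∏ j ∈ Finset.range N, (1 + z * q ^ j)) atTop
      (𝓝 (∑' n, z ^ n * q ^ (n * (n - 1) / 2) / P q n)) := by
    rw [← funext hFN]
    exact main
  exact tendsto_nhds_unique main2 (hasProd_one_add hq hz).tendsto_prod_nat


lemma tri2 (n : ℕ) : 2 * (n * (n + 1) / 2) = n * (n + 1) := by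
  rw [mul_comm n (n + 1)]
  exact tri_even n

lemma one_add_pow_ne {q : ℂ} (hq : ‖q‖ < 1) (j : ℕ) : (1 : ℂ) + q ^ (j + 1) ≠ 0 := by
  have := one_add_ne hq hq j
  intro h
  apply this
  rw [← h]
  ring

/-- splitting off the first `k` factors of `(-q;q)_∞`. -/
lemma tail_prod {q : ℂ} (hq : ‖q‖ < 1) (k : ℕ) :
    (∏ j ∈ Finset.range k, (1 + q ^ (j + 1))) * (∏' j : ℕ, (1 + q ^ (k + 1) * q ^ j))
      = ∏' j : ℕ, (1 + q ^ (j + 1)) := by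
  set L : ℕ → ℂ := fun j => Complex.log (1 + q * q ^ j) with hL
  have hs : Summable L := summable_log hq hq.le
  have hGne : ∀ j : ℕ, (1 : ℂ) + q * q ^ j ≠ 0 := fun j => one_add_ne hq hq j
  -- the full product
  have hE : (∏' j : ℕ, (1 + q ^ (j + 1))) = Complex.exp (∑' j, L j) := by
    have h1 : (∏' j : ℕ, (1 + q ^ (j + 1))) = ∏' j : ℕ, (1 + q * q ^ j) :=
      tprod_congr fun j => by ring
    rw [h1, tprod_one_add_eq hq hq]
  -- the tail product
  have hT : (∏' j : ℕ, (1 + q ^ (k + 1) * q ^ j)) = Complex.exp (∑' j, L (j + k)) := by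
    have h2 : (∏' j : ℕ, (1 + q ^ (k + 1) * q ^ j)) = ∏' j : ℕ, (1 + q * q ^ (j + k)) :=
      tprod_congr fun j => by ring
    rw [h2]
    have := Complex.cexp_tsum_eq_tprod (f := fun n => 1 + q * q ^ (n + k))
      (fun n => hGne (n + k)) ((summable_nat_add_iff k).2 hs)
    exact this.symm
  -- the head product
  have hH : (∏ j ∈ Finset.range k, (1 + q ^ (j + 1)))
      = Complex.exp (∑ j ∈ Finset.range k, L j) := by
    rw [Complex.exp_sum]
    exact (Finset.prod_congr rfl fun j _ => by
      rw [hL, Complex.exp_log (hGne j)]; ring).symm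
  rw [hE, hT, hH, ← Complex.exp_add, Summable.sum_add_tsum_nat_add k hs]

lemma P_sq {q : ℂ} (k : ℕ) :
    P (q ^ 2) k = P q k * ∏ j ∈ Finset.range k, (1 + q ^ (j + 1)) := by
  rw [P, P, ← Finset.prod_mul_distrib]
  exact Finset.prod_congr rfl fun j _ => by ring

lemma tri_ge (n : ℕ) : n ≤ n * (n + 1) / 2 := by
  rcases Nat.eq_zero_or_pos n with rfl | hn
  · simp
  · have h1 := tri2 n
    have h2 : n * (n + 1) = n * n + n := by ring
    have h3 : n ≤ n * n := Nat.le_mul_of_pos_left n hn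
    omega

lemma exp_split (k m : ℕ) :
    k * (k - 1) / 2 + (k + m) * (k + m + 1) / 2
      = k * k + (m * (m - 1) / 2 + m * (k + 1)) := by
  have h1 := tri_even' k
  have h2 := tri2 (k + m)
  have h3 := tri_even' m
  have h4 : k * (k - 1) + (k + m) * (k + m + 1)
      = 2 * (k * k) + (m * (m - 1) + 2 * (m * (k + 1))) := by
    rcases k with _ | k <;> rcases m with _ | m <;>
      simp [Nat.succ_sub_one] <;> ring
  omega

lemma exp_sq (k : ℕ) : k * k = k + 2 * (k * (k - 1) / 2) := by
  have h1 := tri_even' k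
  have h2 : k + k * (k - 1) = k * k := by
    rcases k with _ | k
    · rfl
    · simp [Nat.succ_sub_one]; ring
  omega


end BD
end

open BD

set_option maxHeartbeats 1000000

theorem bailey_daum_neg_one (q : ℂ) (hq : ‖q‖ < 1) :
    (∑' n : ℕ, (∏ j ∈ Finset.range n, (1 - (-1 : ℂ) * q ^ j)) * q ^ (n * (n + 1) / 2) /
        ∏ j ∈ Finset.range n, (1 - q ^ (j + 1))) =
      (∏' j : ℕ, (1 + q ^ (j + 1))) * ∏' j : ℕ, (1 + q ^ (2 * j + 1)) := by
  classical
  have hq0 : (0:ℝ) ≤ ‖q‖ := norm_nonneg q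
  set cc := Real.exp (-(‖q‖ / (1 - ‖q‖) ^ 2)) with hcc
  have hc0 : 0 < cc := Real.exp_pos _
  set f : ℕ × ℕ → ℂ := fun p =>
    q ^ (p.1 * (p.1 - 1) / 2 + (p.1 + p.2) * (p.1 + p.2 + 1) / 2) / (P q p.1 * P q p.2)
    with hf
  -- summability of f
  have hfb : ∀ p : ℕ × ℕ, ‖f p‖ ≤ cc⁻¹ * cc⁻¹ * (‖q‖ ^ p.1 * ‖q‖ ^ p.2) := by
    rintro ⟨k, m⟩
    rw [hf]
    simp only
    rw [norm_div, norm_mul, norm_pow]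
    have he : k + m ≤ k * (k - 1) / 2 + (k + m) * (k + m + 1) / 2 :=
      le_trans (tri_ge (k + m)) (Nat.le_add_left _ _)
    have h1 : ‖q‖ ^ (k * (k - 1) / 2 + (k + m) * (k + m + 1) / 2) ≤ ‖q‖ ^ k * ‖q‖ ^ m := by
      rw [← pow_add]
      exact pow_le_pow_of_le_one hq0 hq.le he
    have h2 : cc * cc ≤ ‖P q k‖ * ‖P q m‖ :=
      mul_le_mul (le_norm_P hq k) (le_norm_P hq m) hc0.le (norm_nonneg _)
    calc ‖q‖ ^ (k * (k - 1) / 2 + (k + m) * (k + m + 1) / 2) / (‖P q k‖ * ‖P q m‖)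
        ≤ (‖q‖ ^ k * ‖q‖ ^ m) / (cc * cc) :=
          div_le_div₀ (by positivity) h1 (by positivity) h2
      _ = cc⁻¹ * cc⁻¹ * (‖q‖ ^ k * ‖q‖ ^ m) := by
          rw [div_eq_mul_inv, mul_inv]; ring
  have hg : Summable (fun p : ℕ × ℕ => ‖q‖ ^ p.1 * ‖q‖ ^ p.2) :=
    (summable_geometric_of_lt_one hq0 hq).mul_of_nonneg
      (summable_geometric_of_lt_one hq0 hq)
      (fun _ => pow_nonneg hq0 _) (fun _ => pow_nonneg hq0 _)
  have hsf : Summable f := Summable.of_norm_bounded (hg.mul_left (cc⁻¹ * cc⁻¹)) hfb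
  -- termwise expansion into antidiagonal sums
  have ht : ∀ n : ℕ,
      (∏ j ∈ Finset.range n, (1 - (-1 : ℂ) * q ^ j)) * q ^ (n * (n + 1) / 2) /
          ∏ j ∈ Finset.range n, (1 - q ^ (j + 1))
        = ∑ p ∈ antidiagonal n, f p := by
    intro n
    have hnum : (∏ j ∈ Finset.range n, (1 - (-1 : ℂ) * q ^ j))
        = ∑ k ∈ Finset.range (n + 1), c q n k * q ^ (k * (k - 1) / 2) := by
      rw [show (∏ j ∈ Finset.range n, (1 - (-1 : ℂ) * q ^ j))
          = ∏ j ∈ Finset.range n, (1 + (1 : ℂ) * q ^ j) from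
        Finset.prod_congr rfl fun j _ => by ring]
      rw [qbinom hq 1 n]
      exact Finset.sum_congr rfl fun k _ => by rw [one_pow, mul_one]
    have hden : (∏ j ∈ Finset.range n, ((1:ℂ) - q ^ (j + 1))) = P q n := rfl
    rw [hnum, hden, Finset.Nat.sum_antidiagonal_eq_sum_range_succ_mk,
      Finset.sum_mul, Finset.sum_div]
    apply Finset.sum_congr rfl
    intro k hk
    have hkn : k ≤ n := Nat.lt_succ_iff.1 (Finset.mem_range.1 hk)
    rw [hf]
    simp only
    have hadd : k + (n - k) = n := by omega
    rw [hadd, c]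
    have hPn := P_ne hq n
    have hPk := P_ne hq k
    have hPnk := P_ne hq (n - k)
    rw [pow_add]
    field_simp
  -- Fubini over the antidiagonal
  have hsig : Summable (fun x : Σ n : ℕ, {p // p ∈ antidiagonal n} => f x.2) :=
    (Equiv.summable_iff Finset.HasAntidiagonal.sigmaAntidiagonalEquivProd).2 hsf
  have hinner : ∀ k : ℕ, ∑' m, f (k, m)
      = (∏' j : ℕ, (1 + q ^ (j + 1)))
        * (q ^ k * (q ^ 2) ^ (k * (k - 1) / 2) / P (q ^ 2) k) := by
    intro k
    have hzk : ‖q ^ (k + 1)‖ < 1 := by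
      rw [norm_pow]; exact pow_lt_one₀ hq0 hq (Nat.succ_ne_zero k)
    have hterm : ∀ m, f (k, m)
        = (q ^ (k * k) / P q k) * ((q ^ (k + 1)) ^ m * q ^ (m * (m - 1) / 2) / P q m) := by
      intro m
      rw [hf]
      simp only
      rw [exp_split k m]
      rw [show (q : ℂ) ^ (k * k + (m * (m - 1) / 2 + m * (k + 1)))
          = q ^ (k * k) * (q ^ (m * (m - 1) / 2) * q ^ (m * (k + 1))) by
        rw [pow_add, pow_add]]
      rw [show ((q : ℂ) ^ (k + 1)) ^ m = q ^ (m * (k + 1)) by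
        rw [← pow_mul, Nat.mul_comm]]
      ring
    rw [tsum_congr hterm, tsum_mul_left, eulerT' hq hzk]
    have hQne : (∏ j ∈ Finset.range k, ((1:ℂ) + q ^ (j + 1))) ≠ 0 :=
      Finset.prod_ne_zero_iff.2 fun j _ => one_add_pow_ne hq j
    have h5 : (∏' j : ℕ, (1 + q ^ (k + 1) * q ^ j))
        = (∏' j : ℕ, (1 + q ^ (j + 1))) / (∏ j ∈ Finset.range k, (1 + q ^ (j + 1))) := by
      rw [eq_div_iff hQne, mul_comm]
      exact tail_prod hq k
    rw [h5, P_sq]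
    have hexp : (q : ℂ) ^ (k * k) = q ^ k * (q ^ 2) ^ (k * (k - 1) / 2) := by
      rw [← pow_mul, ← pow_add, ← exp_sq k]
    rw [hexp]
    have hPk := P_ne hq k
    field_simp
  have hq2 : ‖q ^ 2‖ < 1 := by
    rw [norm_pow]; exact pow_lt_one₀ hq0 hq two_ne_zero
  calc (∑' n : ℕ, (∏ j ∈ Finset.range n, (1 - (-1 : ℂ) * q ^ j)) * q ^ (n * (n + 1) / 2) /
          ∏ j ∈ Finset.range n, (1 - q ^ (j + 1)))
      = ∑' n : ℕ, ∑ p ∈ antidiagonal n, f p := tsum_congr ht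
    _ = ∑' n : ℕ, ∑' p : {p // p ∈ antidiagonal n}, f p :=
        tsum_congr fun n => (Finset.tsum_subtype _ f).symm
    _ = ∑' x : Σ n : ℕ, {p // p ∈ antidiagonal n}, f x.2 :=
        (Summable.tsum_sigma' (fun n => (hasSum_fintype _).summable) hsig).symm
    _ = ∑' p : ℕ × ℕ, f p := Finset.HasAntidiagonal.sigmaAntidiagonalEquivProd.tsum_eq f
    _ = ∑' k : ℕ, ∑' m : ℕ, f (k, m) := Summable.tsum_prod' hsf hsf.prod_factor
    _ = ∑' k : ℕ, (∏' j : ℕ, (1 + q ^ (j + 1)))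
          * (q ^ k * (q ^ 2) ^ (k * (k - 1) / 2) / P (q ^ 2) k) := tsum_congr hinner
    _ = (∏' j : ℕ, (1 + q ^ (j + 1)))
          * ∑' k : ℕ, q ^ k * (q ^ 2) ^ (k * (k - 1) / 2) / P (q ^ 2) k := tsum_mul_left
    _ = (∏' j : ℕ, (1 + q ^ (j + 1))) * ∏' j : ℕ, (1 + q * (q ^ 2) ^ j) := by
        rw [eulerT' hq2 hq]
    _ = (∏' j : ℕ, (1 + q ^ (j + 1))) * ∏' j : ℕ, (1 + q ^ (2 * j + 1)) := by
        rw [tprod_congr (fun j : ℕ => by ring :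
          ∀ j : ℕ, (1 + q * (q ^ 2) ^ j : ℂ) = 1 + q ^ (2 * j + 1))]
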